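/- Let a : ℕ → ℤ satisfy a(0) = 1, a(1) = 1, and the quadratic recurrence a(n) = 1 + 2·∑_{m=1}^{n-1} a(m)·a(n−m) for all n ≥ 2. Then the formal power series G(x) = ∑_{n≥0} a(n)·xⁿ over ℚ satisfies (1 − x)·(2·G² − 5·G + 2) + 1 = 0. -/

import Mathlib

open PowerSeries

theorem stmt_1 (a : ℕ → ℤ) (h0 : a 0 = 1) (h1 : a 1 = 1)
    (hrec : ∀ n, 2 ≤ n → a n = 1 + 2 * ∑ m ∈ Finset.Ico 1 n, a m * a (n - m)) :
    (1 - (X : ℚ⟦X⟧)) * (2 * (PowerSeries.mk fun n => (a n : ℚ))^2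
      - 5 * (PowerSeries.mk fun n => (a n : ℚ)) + 2) + 1 = 0 := by
  set G : ℚ⟦X⟧ := PowerSeries.mk fun n => (a n : ℚ) with hG
  set F : ℚ⟦X⟧ := 2 * G ^ 2 - 5 * G + 2 with hF
  -- key integer identity
  have key : ∀ n : ℕ, 1 ≤ n →
      2 * ∑ m ∈ Finset.range (n + 1), a m * a (n - m) = 5 * a n - 1 := by
    intro n hn
    rcases eq_or_lt_of_le hn with h | h
    · subst h
      simp [Finset.sum_range_succ, h0, h1]
    · have h2 : 2 ≤ n := h
      have hsplit : ∑ m ∈ Finset.range (n + 1), a m * a (n - m)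
          = a 0 * a n + (∑ m ∈ Finset.Ico 1 n, a m * a (n - m)) + a n * a 0 := by
        rw [Finset.sum_range_succ, Finset.range_eq_Ico,
          Finset.sum_eq_sum_Ico_succ_bot (by omega : 0 < n)]
        simp only [Nat.sub_zero, Nat.sub_self, zero_add]
      have hr := hrec n h2
      rw [hsplit, h0]
      linarith
  -- coefficient of F is -1 everywhere
  have h2C : (2 : ℚ⟦X⟧) = C 2 := (map_ofNat (C (R := ℚ)) 2).symm
  have h5C : (5 : ℚ⟦X⟧) = C 5 := (map_ofNat (C (R := ℚ)) 5).symm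
  have hFc : ∀ n : ℕ, (coeff n) F = -1 := by
    intro n
    have hsq : (coeff n) (G ^ 2)
        = ∑ m ∈ Finset.range (n + 1), (a m : ℚ) * (a (n - m) : ℚ) := by
      rw [sq, hG, coeff_mul, Finset.Nat.sum_antidiagonal_eq_sum_range_succ_mk]
      simp
    have hcoeff : (coeff n) F
        = 2 * (∑ m ∈ Finset.range (n + 1), (a m : ℚ) * (a (n - m) : ℚ))
          - 5 * (a n : ℚ) + if n = 0 then 2 else 0 := by
      rw [hF, h2C, h5C, map_add, map_sub, coeff_C_mul, coeff_C_mul, coeff_C, hsq,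
        hG, coeff_mk]
    rcases Nat.eq_zero_or_pos n with h | h
    · subst h
      simp [hcoeff, h0]
      norm_num
    · have := key n h
      have hcast : (2 : ℚ) * ∑ m ∈ Finset.range (n + 1), (a m : ℚ) * (a (n - m) : ℚ)
          = 5 * (a n : ℚ) - 1 := by exact_mod_cast this
      rw [hcoeff, if_neg h.ne']
      linarith
  have hexp : (1 - (X : ℚ⟦X⟧)) * F = F - X * F := by ring
  rw [hexp]
  ext n
  cases n with
  | zero =>
    have := hFc 0
    rw [coeff_zero_eq_constantCoeff] at this
    simp [this]
  | succ m =>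
    simp [coeff_succ_X_mul, hFc, coeff_one]
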